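/- Let G be a finite connected undirected graph with positive edge weights w (conductances), let s ≠ t be vertices. Define the weight of a spanning tree T as the product of the weights of its edges, let N* > 0 be the sum of the weights of all spanning trees of G, and for adjacent vertices a, b let N*_{s,t}(a,b) be the sum of the weights of all spanning trees T in which the unique path from s to t in T traverses the edge {a,b} in the direction from a to b. Define f(a,b) := (N*_{s,t}(a,b) − N*_{s,t}(b,a))/N*. Then f is a distribution of currents in which a unit current enters at s and leaves at t, satisfying Kirchhoff's laws and Ohm's law: (i) for every vertex v, ∑_{b adjacent to v} f(v,b) equals 1 if v = s, equals −1 if v = t, and equals 0 otherwise; and (ii) for every closed walk v₀, v₁, …, v_k = v₀ in G, ∑_{i=0}^{k−1} f(v_i, v_{i+1}) / w({v_i, v_{i+1}}) = 0. -/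

import Mathlib

open SimpleGraph

variable {V : Type*}

/-- `T` is a spanning tree of `G`. -/
def IsSpanningTreeOf (T G : SimpleGraph V) : Prop := T ≤ G ∧ T.IsTree

/-- The unique path from `s` to `t` in the tree `T` traverses the edge `{a,b}`
in the direction from `a` to `b`. -/
def PathTraverses (T : SimpleGraph V) (s t a b : V) : Prop :=
  ∃ p : T.Walk s t, p.IsPath ∧ ∃ d ∈ p.darts, d.toProd = (a, b)

/-- The weight of a spanning tree: the product of the weights (conductances) of
its edges. -/
noncomputable def treeWeight (T : SimpleGraph V) (w : Sym2 V → ℝ) : ℝ :=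
  ∏ᶠ e ∈ T.edgeSet, w e

namespace KirchhoffAux

open SimpleGraph Walk

/-- A "thicket": spanning forest with two components, one containing `s`, one containing `t`. -/
def IsThicket (G : SimpleGraph V) (s t : V) (F : SimpleGraph V) : Prop :=
  F ≤ G ∧ F.IsAcyclic ∧ ¬ F.Reachable s t ∧ ∀ v, F.Reachable v s ∨ F.Reachable v t

lemma sym2_eq_of_edge_adj {a b x y : V} (h : (edge a b).Adj x y) : s(x, y) = s(a, b) := by
  rw [edge_adj] at h
  rcases h.1 with ⟨rfl, rfl⟩ | ⟨rfl, rfl⟩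
  · rfl
  · exact Sym2.eq_swap

lemma reach_of_walk_avoid {T : SimpleGraph V} {a b : V} :
    ∀ {x y : V} (q : T.Walk x y), s(a, b) ∉ q.edges → (T \ edge a b).Reachable x y := by
  intro x y q
  induction q with
  | nil => exact fun _ => Reachable.refl _
  | cons h q ih =>
      intro hmem
      rw [Walk.edges_cons, List.mem_cons] at hmem
      push_neg at hmem
      have hadj : (T \ edge a b).Adj _ _ :=
        ⟨h, fun hc => hmem.1 (sym2_eq_of_edge_adj hc).symm⟩
      exact hadj.reachable.trans (ih hmem.2)

lemma walk_sup_edge {F : SimpleGraph V} {a b : V} (hnr : ¬ F.Reachable a b) :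
    ∀ {x y : V}, (F ⊔ edge a b).Walk x y →
      F.Reachable x y ∨ (F.Reachable x a ∧ F.Reachable b y) ∨
        (F.Reachable x b ∧ F.Reachable a y) := by
  intro x y q
  induction q with
  | nil => exact Or.inl (Reachable.refl _)
  | cons h q ih =>
      rcases (sup_adj _ _ _ _).mp h with hF | hE
      · rcases ih with h1 | ⟨h1, h2⟩ | ⟨h1, h2⟩
        · exact Or.inl (hF.reachable.trans h1)
        · exact Or.inr (Or.inl ⟨hF.reachable.trans h1, h2⟩)
        · exact Or.inr (Or.inr ⟨hF.reachable.trans h1, h2⟩)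
      · rw [edge_adj] at hE
        rcases hE.1 with ⟨rfl, rfl⟩ | ⟨rfl, rfl⟩
        · rcases ih with h1 | ⟨h1, h2⟩ | ⟨h1, h2⟩
          · exact Or.inr (Or.inl ⟨Reachable.refl _, h1⟩)
          · exact absurd h1.symm hnr
          · exact Or.inl h2
        · rcases ih with h1 | ⟨h1, h2⟩ | ⟨h1, h2⟩
          · exact Or.inr (Or.inr ⟨Reachable.refl _, h1⟩)
          · exact Or.inl h2
          · exact absurd h1 hnr

lemma acyclic_sup_edge {F : SimpleGraph V} (hF : F.IsAcyclic) {a b : V}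
    (hnr : ¬ F.Reachable a b) : (F ⊔ edge a b).IsAcyclic := by
  rw [isAcyclic_iff_forall_adj_isBridge]
  intro v w hvw
  rw [isBridge_iff]
  show ¬ ((F ⊔ edge a b) \ fromEdgeSet {s(v, w)}).Reachable v w
  by_cases hcase : s(v, w) = s(a, b)
  · have heq : (F ⊔ edge a b) \ fromEdgeSet {s(v, w)} = F \ edge a b := by
      have h1 : fromEdgeSet {s(v, w)} = edge a b := by rw [hcase]; rfl
      rw [h1, sup_sdiff, _root_.sdiff_self, sup_bot_eq]
    rw [heq]
    intro hr
    have hrF : F.Reachable v w := hr.mono sdiff_le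
    rcases Sym2.eq_iff.mp hcase with ⟨rfl, rfl⟩ | ⟨rfl, rfl⟩
    · exact hnr hrF
    · exact hnr hrF.symm
  · have hFadj : F.Adj v w := by
      rcases (sup_adj _ _ _ _).mp hvw with h | h
      · exact h
      · exact absurd (sym2_eq_of_edge_adj h) hcase
    intro hr
    have heq : (F ⊔ edge a b) \ fromEdgeSet {s(v, w)} = (F \ edge v w) ⊔ edge a b := by
      have h1 : fromEdgeSet {s(v, w)} = edge v w := rfl
      rw [h1, sup_sdiff]
      congr 1
      rw [sdiff_eq_left, disjoint_iff_inf_le]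
      intro x y hxy
      rw [inf_adj] at hxy
      exact absurd ((sym2_eq_of_edge_adj hxy.2).symm.trans (sym2_eq_of_edge_adj hxy.1)) hcase
    rw [heq] at hr
    obtain ⟨q⟩ := hr
    have hnr' : ¬ (F \ edge v w).Reachable a b := fun h => hnr (h.mono sdiff_le)
    rcases walk_sup_edge hnr' q with h1 | ⟨h1, h2⟩ | ⟨h1, h2⟩
    · exact (isBridge_iff.mp (isAcyclic_iff_forall_adj_isBridge.mp hF hFadj)) h1
    · exact hnr ((h1.mono sdiff_le).symm.trans
        (hFadj.reachable.trans (h2.mono sdiff_le).symm))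
    · exact hnr (((h2.mono sdiff_le).trans
        (hFadj.reachable.symm.trans (h1.mono sdiff_le))).symm).symm

lemma reach_endpoint_pair {T : SimpleGraph V} {a b : V} :
    ∀ {x c : V}, T.Walk x c → (c = a ∨ c = b) →
      (T \ edge a b).Reachable x a ∨ (T \ edge a b).Reachable x b := by
  intro x c q
  induction q with
  | nil =>
      rintro (rfl | rfl)
      · exact Or.inl (Reachable.refl _)
      · exact Or.inr (Reachable.refl _)
  | @cons u u' _ h q ih =>
      intro hc
      by_cases hcase : s(u, u') = s(a, b)
      · rcases Sym2.eq_iff.mp hcase with ⟨rfl, rfl⟩ | ⟨rfl, rfl⟩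
        · exact Or.inl (Reachable.refl _)
        · exact Or.inr (Reachable.refl _)
      · have hadj : (T \ edge a b).Adj u u' :=
          ⟨h, fun hc' => hcase (sym2_eq_of_edge_adj hc')⟩
        rcases ih hc with h1 | h1
        · exact Or.inl (hadj.reachable.trans h1)
        · exact Or.inr (hadj.reachable.trans h1)

lemma darts_sum_telescope {G : SimpleGraph V} (g : V → ℝ) :
    ∀ {x y : V} (p : G.Walk x y),
      (p.darts.map (fun d => g d.toProd.1 - g d.toProd.2)).sum = g x - g y := by
  intro x y p
  induction p with
  | nil => simp
  | cons h p ih =>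
      rw [Walk.darts_cons, List.map_cons, List.sum_cons, ih]
      ring

lemma mem_dropLast_iff {α : Type*} {l : List α} (hl : l.Nodup) (hne : l ≠ []) {x : α} :
    x ∈ l.dropLast ↔ x ∈ l ∧ x ≠ l.getLast hne := by
  have hsplit : l.dropLast ++ [l.getLast hne] = l := List.dropLast_append_getLast hne
  constructor
  · intro hx
    refine ⟨(List.dropLast_sublist l).subset hx, ?_⟩
    intro hxe
    have hnd := hl
    rw [← hsplit] at hnd
    exact (List.disjoint_of_nodup_append hnd) hx (by simp [hxe])
  · rintro ⟨hx, hne'⟩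
    rw [← hsplit, List.mem_append] at hx
    rcases hx with hx | hx
    · exact hx
    · simp only [List.mem_singleton] at hx
      exact absurd hx hne'

section TreeLocal

variable [Fintype V] [DecidableEq V]

open scoped Classical in
/-- The per-tree Kirchhoff current law. -/
lemma tree_local {G T : SimpleGraph V} [DecidableRel G.Adj]
    (hle : T ≤ G) (hT : T.IsTree) {s t : V} (hst : s ≠ t) (v : V) :
    ∑ b ∈ Finset.univ.filter (fun b => G.Adj v b),
      ((if PathTraverses T s t v b then (1:ℝ) else 0) -
       (if PathTraverses T s t b v then (1:ℝ) else 0)) =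
      if v = s then 1 else if v = t then -1 else 0 := by
  obtain ⟨q⟩ := hT.1.preconnected s t
  set P : T.Path s t := q.toPath with hP
  set p : T.Walk s t := (P : T.Walk s t) with hpp
  have hp : p.IsPath := P.2
  have hchar : ∀ a b : V, PathTraverses T s t a b ↔ ∃ d ∈ p.darts, d.toProd = (a, b) := by
    intro a b
    constructor
    · rintro ⟨p', hp', hd⟩
      have heq : (⟨p', hp'⟩ : T.Path s t) = P := hT.2.path_unique _ _
      have hpe : p' = p := congrArg Subtype.val heq
      rwa [hpe] at hd
    · intro h
      exact ⟨p, hp, h⟩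
  have hnodup : p.support.Nodup := hp.support_nodup
  have hnefst : p.support ≠ [] := p.support_ne_nil
  have hgetLast : p.support.getLast hnefst = t := p.getLast_support
  have hfstnodup : (p.darts.map (fun d => d.toProd.1)).Nodup := by
    rw [p.map_fst_darts]
    exact (List.dropLast_sublist _).nodup hnodup
  have hsndnodup : (p.darts.map (fun d => d.toProd.2)).Nodup := by
    rw [p.map_snd_darts]
    exact (List.tail_sublist _).nodup hnodup
  have hA : ∑ b ∈ Finset.univ.filter (fun b => G.Adj v b),
      (if PathTraverses T s t v b then (1:ℝ) else 0) =
      if v ∈ p.support ∧ v ≠ t then 1 else 0 := by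
    by_cases hv : v ∈ p.support ∧ v ≠ t
    · have hv' : v ∈ p.support.dropLast := by
        rw [mem_dropLast_iff hnodup hnefst, hgetLast]
        exact hv
      rw [← p.map_fst_darts] at hv'
      obtain ⟨d, hd, hdv⟩ := List.mem_map.mp hv'
      have hcond : ∀ b : V, PathTraverses T s t v b ↔ b = d.toProd.2 := by
        intro b
        rw [hchar]
        constructor
        · rintro ⟨d', hd', hdp'⟩
          have hdd : d' = d := List.inj_on_of_nodup_map hfstnodup hd' hd
            (by rw [hdp', hdv])
          rw [← hdd, hdp']
        · rintro rfl
          exact ⟨d, hd, by rw [← hdv]⟩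
      simp only [hcond]
      rw [Finset.sum_ite_eq' _ (d.toProd.2) (fun _ => (1:ℝ)), if_pos, if_pos hv]
      rw [Finset.mem_filter]
      refine ⟨Finset.mem_univ _, ?_⟩
      exact hle (show T.Adj v d.toProd.2 by rw [← hdv]; exact d.adj)
    · rw [if_neg hv]
      apply Finset.sum_eq_zero
      intro b _
      rw [if_neg]
      rw [hchar]
      rintro ⟨d', hd', hdp'⟩
      apply hv
      have hfst : d'.toProd.1 = v := by rw [hdp']
      have hvmem : v ∈ p.support.dropLast := by
        rw [← p.map_fst_darts]
        exact List.mem_map.mpr ⟨d', hd', hfst⟩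
      rw [mem_dropLast_iff hnodup hnefst, hgetLast] at hvmem
      exact hvmem
  have hB : ∑ b ∈ Finset.univ.filter (fun b => G.Adj v b),
      (if PathTraverses T s t b v then (1:ℝ) else 0) =
      if v ∈ p.support ∧ v ≠ s then 1 else 0 := by
    have htail : ∀ x : V, x ∈ p.support.tail ↔ x ∈ p.support ∧ x ≠ s := by
      intro x
      have hcons : p.support = s :: p.support.tail := p.support_eq_cons
      have hs_tail : s ∉ p.support.tail := by
        have := hnodup
        rw [hcons] at this
        exact (List.nodup_cons.mp this).1
      constructor
      · intro hx
        refine ⟨by rw [hcons]; exact List.mem_cons_of_mem _ hx, ?_⟩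
        rintro rfl
        exact hs_tail hx
      · rintro ⟨hx, hxs⟩
        rw [hcons, List.mem_cons] at hx
        exact hx.resolve_left hxs
    by_cases hv : v ∈ p.support ∧ v ≠ s
    · have hv' : v ∈ p.support.tail := (htail v).mpr hv
      rw [← p.map_snd_darts] at hv'
      obtain ⟨d, hd, hdv⟩ := List.mem_map.mp hv'
      have hcond : ∀ b : V, PathTraverses T s t b v ↔ b = d.toProd.1 := by
        intro b
        rw [hchar]
        constructor
        · rintro ⟨d', hd', hdp'⟩
          have hdd : d' = d := List.inj_on_of_nodup_map hsndnodup hd' hd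
            (by rw [hdp', hdv])
          rw [← hdd, hdp']
        · rintro rfl
          exact ⟨d, hd, by rw [← hdv]⟩
      simp only [hcond]
      rw [Finset.sum_ite_eq' _ (d.toProd.1) (fun _ => (1:ℝ)), if_pos, if_pos hv]
      rw [Finset.mem_filter]
      refine ⟨Finset.mem_univ _, ?_⟩
      exact (hle (show T.Adj d.toProd.1 v by rw [← hdv]; exact d.adj)).symm
    · rw [if_neg hv]
      apply Finset.sum_eq_zero
      intro b _
      rw [if_neg]
      rw [hchar]
      rintro ⟨d', hd', hdp'⟩
      apply hv
      have hsnd : d'.toProd.2 = v := by rw [hdp']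
      have hvmem : v ∈ p.support.tail := by
        rw [← p.map_snd_darts]
        exact List.mem_map.mpr ⟨d', hd', hsnd⟩
      exact (htail v).mp hvmem
  rw [Finset.sum_sub_distrib, hA, hB]
  have hs_mem : s ∈ p.support := p.start_mem_support
  have ht_mem : t ∈ p.support := p.end_mem_support
  by_cases h1 : v = s
  · subst h1
    rw [if_pos ⟨hs_mem, hst⟩, if_neg (fun h => h.2 rfl), if_pos rfl]
    norm_num
  · by_cases h2 : v = t
    · subst h2
      rw [if_neg (fun h => h.2 rfl), if_pos ⟨ht_mem, fun h => hst h.symm⟩,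
        if_neg h1, if_pos rfl]
      norm_num
    · rw [if_neg h1, if_neg h2]
      by_cases hv : v ∈ p.support
      · rw [if_pos ⟨hv, h2⟩, if_pos ⟨hv, h1⟩]
        norm_num
      · rw [if_neg (fun h => hv h.1), if_neg (fun h => hv h.1)]
        norm_num

end TreeLocal

section Bijection

variable [Fintype V] [DecidableEq V]

lemma forward_thicket {G T : SimpleGraph V} {s t a b : V}
    (hsp : IsSpanningTreeOf T G) (htr : PathTraverses T s t a b) :
    T.Adj a b ∧ IsThicket G s t (T \ edge a b) ∧
      (T \ edge a b).Reachable a s ∧ (T \ edge a b).Reachable b t := by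
  classical
  obtain ⟨p, hp, d, hd, hdp⟩ := htr
  have hfst : d.toProd.1 = a := by rw [hdp]
  have hsnd : d.toProd.2 = b := by rw [hdp]
  have hTab : T.Adj a b := by rw [← hfst, ← hsnd]; exact d.adj
  have hne : a ≠ b := hTab.ne
  have hbr : ¬ (T \ edge a b).Reachable a b :=
    (isBridge_iff.mp (isAcyclic_iff_forall_adj_isBridge.mp hsp.2.2 hTab))
  have hedges_nodup : p.edges.Nodup := Walk.edges_nodup_of_support_nodup hp.support_nodup
  have hEd : p.edges = p.darts.map SimpleGraph.Dart.edge := rfl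
  have hba : ∀ d' ∈ p.darts, d'.toProd ≠ (b, a) := by
    intro d' hd' hdp'
    have hedge : d'.edge = d.edge := by
      show s(d'.toProd.1, d'.toProd.2) = s(d.toProd.1, d.toProd.2)
      rw [hdp, hdp']
      exact Sym2.eq_swap
    have hdd : d' = d := by
      have hnd : (p.darts.map SimpleGraph.Dart.edge).Nodup := by rw [← hEd]; exact hedges_nodup
      exact List.inj_on_of_nodup_map hnd hd' hd hedge
    rw [hdd, hdp] at hdp'
    exact hne (congrArg Prod.fst hdp')
  have ha_mem : a ∈ p.support := by
    rw [← hfst]; exact Walk.dart_fst_mem_support_of_mem_darts p hd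
  have hb_mem : b ∈ p.support := by
    rw [← hsnd]; exact Walk.dart_snd_mem_support_of_mem_darts p hd
  have hsym2 : ∀ (d' : T.Dart), d'.edge = s(a, b) →
      d'.toProd = (a, b) ∨ d'.toProd = (b, a) := by
    intro d' hde
    have h2 : s(d'.toProd.1, d'.toProd.2) = s(a, b) := hde
    rcases Sym2.eq_iff.mp h2 with ⟨h3, h4⟩ | ⟨h3, h4⟩
    · left; exact Prod.ext h3 h4
    · right; exact Prod.ext h3 h4
  have hras : (T \ edge a b).Reachable a s := by
    set q : T.Walk s a := p.takeUntil a ha_mem with hq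
    have hqe : s(a, b) ∉ q.edges := by
      intro hmem
      have hEd' : q.edges = q.darts.map SimpleGraph.Dart.edge := rfl
      rw [hEd'] at hmem
      obtain ⟨d', hd', hde⟩ := List.mem_map.mp hmem
      rcases hsym2 d' hde with h5 | h5
      · have hcount := p.count_support_takeUntil_eq_one ha_mem
        have hmem1 : a ∈ q.support.dropLast := by
          rw [← q.map_fst_darts]
          exact List.mem_map.mpr ⟨d', hd', by rw [h5]⟩
        have hqne : q.support ≠ [] := q.support_ne_nil
        have hlast : q.support.getLast hqne = a := q.getLast_support
        have h6 : q.support.count a = q.support.dropLast.count a + 1 := by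
          conv_lhs => rw [← List.dropLast_append_getLast hqne]
          rw [List.count_append, hlast]
          simp
        have h7 : 0 < q.support.dropLast.count a := List.count_pos_iff.mpr hmem1
        rw [hcount] at h6
        omega
      · exact hba d' (p.darts_takeUntil_subset ha_mem hd') h5
    exact (reach_of_walk_avoid q hqe).symm
  have hrbt : (T \ edge a b).Reachable b t := by
    set r : T.Walk b t := p.dropUntil b hb_mem with hr
    have hre : s(a, b) ∉ r.edges := by
      intro hmem
      have hEd' : r.edges = r.darts.map SimpleGraph.Dart.edge := rfl
      rw [hEd'] at hmem
      obtain ⟨d', hd', hde⟩ := List.mem_map.mp hmem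
      rcases hsym2 d' hde with h5 | h5
      · have hb1 : b ∈ r.support.tail := by
          rw [← r.map_snd_darts]
          exact List.mem_map.mpr ⟨d', hd', by rw [h5]⟩
        have hrp : r.IsPath := hp.dropUntil hb_mem
        have hrn := hrp.support_nodup
        rw [r.support_eq_cons] at hrn
        exact (List.nodup_cons.mp hrn).1 hb1
      · exact hba d' (p.darts_dropUntil_subset hb_mem hd') h5
    exact reach_of_walk_avoid r hre
  refine ⟨hTab, ⟨sdiff_le.trans hsp.1, ?_, ?_, ?_⟩, hras, hrbt⟩
  · intro u c hc
    exact hsp.2.2 (c.mapLe sdiff_le) ((Walk.mapLe_isCycle sdiff_le).mpr hc)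
  · intro hstr
    exact hbr (hras.trans (hstr.trans hrbt.symm))
  · intro u
    obtain ⟨qa⟩ := hsp.2.1.preconnected u a
    rcases reach_endpoint_pair qa (Or.inl rfl) with h1 | h1
    · exact Or.inl (h1.trans hras)
    · exact Or.inr (h1.trans hrbt)

lemma treeWeight_sdiff {T : SimpleGraph V} {a b : V} (hab : T.Adj a b)
    (w : Sym2 V → ℝ) : treeWeight T w = w s(a, b) * treeWeight (T \ edge a b) w := by
  have hne : a ≠ b := hab.ne
  have hes : (T \ edge a b).edgeSet = T.edgeSet \ {s(a, b)} := by
    rw [edgeSet_sdiff, edge_edgeSet_of_ne hne]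
  have hmem : s(a, b) ∈ T.edgeSet := T.mem_edgeSet.mpr hab
  have hins : T.edgeSet = insert s(a, b) ((T \ edge a b).edgeSet) := by
    rw [hes, Set.insert_diff_singleton, Set.insert_eq_self.mpr hmem]
  have hnotmem : s(a, b) ∉ (T \ edge a b).edgeSet := by
    rw [hes]; simp
  rw [treeWeight, treeWeight, hins, finprod_mem_insert w hnotmem (Set.toFinite _)]

lemma backward_tree {G F : SimpleGraph V} {s t a b : V}
    (hab : G.Adj a b) (hF : IsThicket G s t F) (ha : F.Reachable a s) (hb : F.Reachable b t) :
    IsSpanningTreeOf (F ⊔ edge a b) G ∧ PathTraverses (F ⊔ edge a b) s t a b := by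
  classical
  have hne : a ≠ b := hab.ne
  have hnrab : ¬ F.Reachable a b := fun h => hF.2.2.1 (ha.symm.trans (h.trans hb))
  have hTadj : (F ⊔ edge a b).Adj a b := by
    refine (sup_adj _ _ _ _).mpr (Or.inr ?_)
    rw [edge_adj]
    exact ⟨Or.inl ⟨rfl, rfl⟩, hne⟩
  have hleG : F ⊔ edge a b ≤ G := by
    refine sup_le hF.1 ?_
    intro x y hxy
    rw [edge_adj] at hxy
    rcases hxy.1 with ⟨rfl, rfl⟩ | ⟨rfl, rfl⟩
    · exact hab
    · exact hab.symm
  have hall : ∀ u, (F ⊔ edge a b).Reachable u s := by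
    intro u
    rcases hF.2.2.2 u with h | h
    · exact h.mono le_sup_left
    · exact ((h.mono le_sup_left).trans ((hb.mono le_sup_left).symm)).trans
        (hTadj.symm.reachable.trans (ha.mono le_sup_left))
  have hconn : (F ⊔ edge a b).Connected := by
    rw [connected_iff]
    exact ⟨fun u u' => (hall u).trans (hall u').symm, ⟨s⟩⟩
  have hacyc := acyclic_sup_edge hF.2.1 hnrab
  refine ⟨⟨hleG, hconn, hacyc⟩, ?_⟩
  obtain ⟨q1'⟩ := ha.symm
  obtain ⟨q2'⟩ := hb
  set q1 : F.Walk s a := q1'.toPath.1 with hq1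
  set q2 : F.Walk b t := q2'.toPath.1 with hq2
  have hq1p : q1.IsPath := q1'.toPath.2
  have hq2p : q2.IsPath := q2'.toPath.2
  have hd1 : ∀ u ∈ q1.support, F.Reachable u a := fun u hu => ⟨q1.dropUntil u hu⟩
  have hd2 : ∀ u ∈ q2.support, F.Reachable b u := fun u hu => ⟨q2.takeUntil u hu⟩
  have hdisj : ∀ u, u ∈ q1.support → u ∈ q2.support → False := by
    intro u h1 h2
    exact hnrab ((hd1 u h1).symm.trans (hd2 u h2).symm)
  set W1 : (F ⊔ edge a b).Walk s a := q1.mapLe le_sup_left with hW1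
  set W2 : (F ⊔ edge a b).Walk b t := q2.mapLe le_sup_left with hW2
  set W : (F ⊔ edge a b).Walk s t := W1.append (Walk.cons hTadj W2) with hW
  have hWs1 : W1.support = q1.support := by
    rw [hW1, Walk.support_map]
    exact List.map_id _
  have hWs2 : W2.support = q2.support := by
    rw [hW2, Walk.support_map]
    exact List.map_id _
  have hWpath : W.IsPath := by
    rw [hW, Walk.isPath_def, Walk.support_append, Walk.support_cons, List.tail_cons]
    rw [hWs1, hWs2]
    exact List.Nodup.append hq1p.support_nodup hq2p.support_nodup
      (fun u hu1 hu2 => hdisj u hu1 hu2)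
  refine ⟨W, hWpath, ⟨(a, b), hTadj⟩, ?_, rfl⟩
  rw [hW, Walk.darts_append, Walk.darts_cons]
  exact List.mem_append.mpr (Or.inr List.mem_cons_self)

open scoped Classical in
lemma dir_sum_eq {G : SimpleGraph V} {s t a b : V}
    (hab : G.Adj a b) (w : Sym2 V → ℝ)
    (𝒯 ℱ : Finset (SimpleGraph V))
    (h𝒯 : ∀ T, T ∈ 𝒯 ↔ IsSpanningTreeOf T G)
    (hℱ : ∀ F, F ∈ ℱ ↔ IsThicket G s t F) :
    ∑ T ∈ 𝒯.filter (fun T => PathTraverses T s t a b), treeWeight T w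
      = w s(a, b) * ∑ F ∈ ℱ.filter (fun F => F.Reachable a s ∧ F.Reachable b t),
          treeWeight F w := by
  rw [Finset.mul_sum]
  refine Finset.sum_bij' (fun T _ => T \ edge a b) (fun F _ => F ⊔ edge a b) ?_ ?_ ?_ ?_ ?_
  · intro T hT
    rw [Finset.mem_filter] at hT
    obtain ⟨hadj, hth, h1, h2⟩ := forward_thicket ((h𝒯 T).mp hT.1) hT.2
    exact Finset.mem_filter.mpr ⟨(hℱ _).mpr hth, h1, h2⟩
  · intro F hFm
    rw [Finset.mem_filter] at hFm
    obtain ⟨hsp, htr⟩ := backward_tree hab ((hℱ F).mp hFm.1) hFm.2.1 hFm.2.2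
    exact Finset.mem_filter.mpr ⟨(h𝒯 _).mpr hsp, htr⟩
  · intro T hT
    rw [Finset.mem_filter] at hT
    obtain ⟨hadj, -, -, -⟩ := forward_thicket ((h𝒯 T).mp hT.1) hT.2
    have hle : edge a b ≤ T := by
      intro x y hxy
      rw [edge_adj] at hxy
      rcases hxy.1 with ⟨rfl, rfl⟩ | ⟨rfl, rfl⟩
      · exact hadj
      · exact hadj.symm
    exact sdiff_sup_cancel hle
  · intro F hFm
    rw [Finset.mem_filter] at hFm
    have hth := (hℱ F).mp hFm.1
    have hnr : ¬ F.Reachable a b :=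
      fun h => hth.2.2.1 (hFm.2.1.symm.trans (h.trans hFm.2.2))
    have hd : Disjoint F (edge a b) := by
      rw [disjoint_iff_inf_le]
      intro x y hxy
      rw [inf_adj] at hxy
      exfalso
      rcases Sym2.eq_iff.mp (sym2_eq_of_edge_adj hxy.2) with ⟨rfl, rfl⟩ | ⟨rfl, rfl⟩
      · exact hnr hxy.1.reachable
      · exact hnr hxy.1.symm.reachable
    exact hd.sup_sdiff_cancel_right
  · intro T hT
    rw [Finset.mem_filter] at hT
    obtain ⟨hadj, -, -, -⟩ := forward_thicket ((h𝒯 T).mp hT.1) hT.2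
    exact treeWeight_sdiff hadj w

end Bijection

end KirchhoffAux

theorem weighted_spanning_tree_flow_satisfies_kirchhoff_and_ohm_laws
    [Fintype V] [DecidableEq V]
    (G : SimpleGraph V) [DecidableRel G.Adj] (hG : G.Connected)
    (w : Sym2 V → ℝ) (hw : ∀ e ∈ G.edgeSet, 0 < w e)
    (s t : V) (hst : s ≠ t)
    (Nstar : ℝ)
    (hNstar : Nstar = ∑ᶠ T ∈ {T : SimpleGraph V | IsSpanningTreeOf T G}, treeWeight T w)
    (hNpos : 0 < Nstar)
    (NstarDir : V → V → ℝ)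
    (hNstarDir : ∀ a b, NstarDir a b =
      ∑ᶠ T ∈ {T : SimpleGraph V | IsSpanningTreeOf T G ∧ PathTraverses T s t a b},
        treeWeight T w)
    (f : V → V → ℝ)
    (hf : ∀ a b, f a b = (NstarDir a b - NstarDir b a) / Nstar) :
    -- (i) Kirchhoff's current law: a unit current enters at `s` and leaves at `t`
    (∀ v : V, ∑ b ∈ Finset.univ.filter (fun b => G.Adj v b), f v b =
      if v = s then 1 else if v = t then -1 else 0) ∧
    -- (ii) Kirchhoff's voltage law together with Ohm's law along every closed walk
    (∀ v : V, ∀ p : G.Walk v v,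
      (p.darts.map (fun d => f d.toProd.1 d.toProd.2 / w s(d.toProd.1, d.toProd.2))).sum
        = 0) := by
  classical
  set 𝒯 : Finset (SimpleGraph V) :=
    (Set.toFinite {T : SimpleGraph V | IsSpanningTreeOf T G}).toFinset with h𝒯def
  have h𝒯 : ∀ T, T ∈ 𝒯 ↔ IsSpanningTreeOf T G := by
    intro T
    rw [h𝒯def, Set.Finite.mem_toFinset]
    rfl
  set ℱ : Finset (SimpleGraph V) :=
    (Set.toFinite {F : SimpleGraph V | KirchhoffAux.IsThicket G s t F}).toFinset with hℱdef
  have hℱ : ∀ F, F ∈ ℱ ↔ KirchhoffAux.IsThicket G s t F := by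
    intro F
    rw [hℱdef, Set.Finite.mem_toFinset]
    rfl
  have hNstar' : Nstar = ∑ T ∈ 𝒯, treeWeight T w := by
    have hset : {T : SimpleGraph V | IsSpanningTreeOf T G} = ↑𝒯 := by
      rw [h𝒯def, Set.Finite.coe_toFinset]
    rw [hNstar, hset, finsum_mem_coe_finset]
  have hNdir : ∀ a b, NstarDir a b =
      ∑ T ∈ 𝒯.filter (fun T => PathTraverses T s t a b), treeWeight T w := by
    intro a b
    have hset : {T : SimpleGraph V | IsSpanningTreeOf T G ∧ PathTraverses T s t a b}
        = ↑(𝒯.filter (fun T => PathTraverses T s t a b)) := by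
      ext T
      simp only [Set.mem_setOf_eq, Finset.coe_filter, h𝒯]
    rw [hNstarDir, hset, finsum_mem_coe_finset]
  have hNdir' : ∀ a b, NstarDir a b =
      ∑ T ∈ 𝒯, (if PathTraverses T s t a b then treeWeight T w else 0) := by
    intro a b
    rw [hNdir, Finset.sum_filter]
  constructor
  · -- Kirchhoff's current law
    intro v
    have h1 : ∀ b, NstarDir v b - NstarDir b v
        = ∑ T ∈ 𝒯, treeWeight T w *
            ((if PathTraverses T s t v b then (1:ℝ) else 0) -
             (if PathTraverses T s t b v then (1:ℝ) else 0)) := by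
      intro b
      rw [hNdir' v b, hNdir' b v, ← Finset.sum_sub_distrib]
      refine Finset.sum_congr rfl fun T _ => ?_
      by_cases hA : PathTraverses T s t v b <;> by_cases hB : PathTraverses T s t b v <;>
        simp [hA, hB]
    have h2 : ∑ b ∈ Finset.univ.filter (fun b => G.Adj v b), (NstarDir v b - NstarDir b v)
        = ∑ T ∈ 𝒯, treeWeight T w *
            (if v = s then (1:ℝ) else if v = t then -1 else 0) := by
      calc ∑ b ∈ Finset.univ.filter (fun b => G.Adj v b), (NstarDir v b - NstarDir b v)
          = ∑ b ∈ Finset.univ.filter (fun b => G.Adj v b), ∑ T ∈ 𝒯, treeWeight T w *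
              ((if PathTraverses T s t v b then (1:ℝ) else 0) -
               (if PathTraverses T s t b v then (1:ℝ) else 0)) :=
            Finset.sum_congr rfl fun b _ => h1 b
        _ = ∑ T ∈ 𝒯, ∑ b ∈ Finset.univ.filter (fun b => G.Adj v b), treeWeight T w *
              ((if PathTraverses T s t v b then (1:ℝ) else 0) -
               (if PathTraverses T s t b v then (1:ℝ) else 0)) := Finset.sum_comm
        _ = ∑ T ∈ 𝒯, treeWeight T w *
              (if v = s then (1:ℝ) else if v = t then -1 else 0) := by
            refine Finset.sum_congr rfl fun T hT => ?_
            rw [← Finset.mul_sum,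
              KirchhoffAux.tree_local ((h𝒯 T).mp hT).1 ((h𝒯 T).mp hT).2 hst v]
    have hsum : ∑ b ∈ Finset.univ.filter (fun b => G.Adj v b), f v b
        = (∑ b ∈ Finset.univ.filter (fun b => G.Adj v b),
            (NstarDir v b - NstarDir b v)) / Nstar := by
      rw [Finset.sum_div]
      exact Finset.sum_congr rfl fun b _ => hf v b
    rw [hsum, h2, ← Finset.sum_mul, ← hNstar', mul_comm Nstar, mul_div_assoc,
      div_self (ne_of_gt hNpos), mul_one]
  · -- Kirchhoff's voltage law / Ohm's law
    intro v p
    set Φ : V → ℝ :=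
      fun u => ∑ F ∈ ℱ, (if F.Reachable u s then treeWeight F w else 0) with hΦ
    have hdir : ∀ a b, G.Adj a b →
        NstarDir a b - NstarDir b a = w s(a, b) * (Φ a - Φ b) := by
      intro a b hab
      have hsw : s(b, a) = s(a, b) := Sym2.eq_swap
      rw [hNdir a b, hNdir b a,
        KirchhoffAux.dir_sum_eq hab w 𝒯 ℱ h𝒯 hℱ,
        KirchhoffAux.dir_sum_eq hab.symm w 𝒯 ℱ h𝒯 hℱ, hsw, ← mul_sub]
      congr 1
      rw [Finset.sum_filter, Finset.sum_filter, ← Finset.sum_sub_distrib, hΦ,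
        ← Finset.sum_sub_distrib]
      refine Finset.sum_congr rfl fun F hFm => ?_
      have hth := (hℱ F).mp hFm
      have hnost : ¬ F.Reachable s t := hth.2.2.1
      have hcov := hth.2.2.2
      have hxor : ∀ u, F.Reachable u s → ¬ F.Reachable u t :=
        fun u hu1 hu2 => hnost (hu1.symm.trans hu2)
      by_cases h1 : F.Reachable a s <;> by_cases h2 : F.Reachable b s
      · have h3 : ¬ F.Reachable b t := hxor b h2
        have h4 : ¬ F.Reachable a t := hxor a h1
        simp [h1, h2, h3, h4]
      · have h3 : F.Reachable b t := (hcov b).resolve_left h2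
        have h4 : ¬ F.Reachable a t := hxor a h1
        simp [h1, h2, h3, h4]
      · have h3 : F.Reachable a t := (hcov a).resolve_left h1
        have h4 : ¬ F.Reachable b t := hxor b h2
        simp [h1, h2, h3, h4]
      · simp [h1, h2]
    have hterm : ∀ d ∈ p.darts,
        f d.toProd.1 d.toProd.2 / w s(d.toProd.1, d.toProd.2)
          = Φ d.toProd.1 / Nstar - Φ d.toProd.2 / Nstar := by
      intro d _
      have hadj : G.Adj d.toProd.1 d.toProd.2 := d.adj
      have hwpos := hw _ (G.mem_edgeSet.mpr hadj)
      have hwne : w s(d.toProd.1, d.toProd.2) ≠ 0 := ne_of_gt hwpos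
      have hNne : Nstar ≠ 0 := ne_of_gt hNpos
      rw [hf, hdir _ _ hadj]
      field_simp
    have hmapeq : p.darts.map
          (fun d => f d.toProd.1 d.toProd.2 / w s(d.toProd.1, d.toProd.2))
        = p.darts.map (fun d => Φ d.toProd.1 / Nstar - Φ d.toProd.2 / Nstar) :=
      List.map_congr_left hterm
    have htel := KirchhoffAux.darts_sum_telescope (G := G) (fun u => Φ u / Nstar) p
    rw [hmapeq]
    simpa using htel
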